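/- Let M be a finitely generated 𝔖-module and let f : M → M be an additive map satisfying f(am) = φ(a)f(m) for all a ∈ 𝔖 and m ∈ M, and f(M) ⊆ uM. Then f − id_M : M → M is bijective. -/

import Mathlib

open PowerSeries TensorProduct

attribute [local instance] ZMod.algebra

set_option maxHeartbeats 2000000

/-- if `M` is a finitely generated `𝔖`-module, `𝔖 = (k ⊗_{𝔽_p} 𝔽)[[u]]`,
and `f : M → M` is additive with `f(a•m) = φ(a)•f(m)` and `f(M) ⊆ uM`, then
`f - id` is bijective. -/
theorem statement7
    (p : ℕ) [Fact p.Prime] (k 𝔽 : Type) [Field k] [Fintype k] [CharP k p]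
    [Field 𝔽] [Fintype 𝔽] [CharP 𝔽 p]
    (φ : PowerSeries (k ⊗[ZMod p] 𝔽) →+* PowerSeries (k ⊗[ZMod p] 𝔽))
    (hφC : ∀ (a : k) (b : 𝔽),
      φ (PowerSeries.C (a ⊗ₜ[ZMod p] b)) = PowerSeries.C ((a ^ p) ⊗ₜ[ZMod p] b))
    (hφ0 : ∀ (f : PowerSeries (k ⊗[ZMod p] 𝔽)) (m : ℕ), ¬ p ∣ m →
      PowerSeries.coeff m (φ f) = 0)
    (hφ1 : ∀ (f : PowerSeries (k ⊗[ZMod p] 𝔽)) (n : ℕ),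
      PowerSeries.coeff (p * n) (φ f) =
        PowerSeries.constantCoeff (φ (PowerSeries.C (PowerSeries.coeff n f))))
    (M : Type) [AddCommGroup M] [Module (PowerSeries (k ⊗[ZMod p] 𝔽)) M]
    [Module.Finite (PowerSeries (k ⊗[ZMod p] 𝔽)) M]
    (f : M → M)
    (hadd : ∀ x y, f (x + y) = f x + f y)
    (hsmul : ∀ (a : PowerSeries (k ⊗[ZMod p] 𝔽)) (m : M), f (a • m) = φ a • f m)
    (him : ∀ m : M, ∃ m' : M, f m = (PowerSeries.X : PowerSeries (k ⊗[ZMod p] 𝔽)) • m') :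
    Function.Bijective (fun m : M => f m - m) := by
  classical
  set I : Ideal (PowerSeries (k ⊗[ZMod p] 𝔽)) := Ideal.span {PowerSeries.X} with hI
  let F : M →+ M := AddMonoidHom.mk' f hadd
  -- φ preserves powers of I
  have hφI : ∀ (n : ℕ) (a : PowerSeries (k ⊗[ZMod p] 𝔽)), a ∈ I ^ n → φ a ∈ I ^ n := by
    intro n a ha
    rw [hI, Ideal.span_singleton_pow, Ideal.mem_span_singleton,
      PowerSeries.X_pow_dvd_iff] at ha ⊢
    intro m hm
    by_cases hp : p ∣ m
    · obtain ⟨j, rfl⟩ := hp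
      have hj : j < n :=
        lt_of_le_of_lt (Nat.le_mul_of_pos_left j (Fact.out (p := p.Prime)).pos) hm
      rw [hφ1 a j, ha j hj, map_zero, map_zero, map_zero]
    · exact hφ0 a m hp
  -- f maps I^n • ⊤ into I^(n+1) • ⊤
  have hfI : ∀ (n : ℕ) (x : M), x ∈ (I ^ n • ⊤ : Submodule (PowerSeries (k ⊗[ZMod p] 𝔽)) M) →
      f x ∈ (I ^ (n+1) • ⊤ : Submodule (PowerSeries (k ⊗[ZMod p] 𝔽)) M) := by
    intro n x hx
    refine Submodule.smul_induction_on hx ?_ ?_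
    · intro r hr m _
      obtain ⟨m', hm'⟩ := him m
      rw [hsmul, hm', smul_smul]
      refine Submodule.smul_mem_smul ?_ Submodule.mem_top
      rw [pow_succ]
      exact Ideal.mul_mem_mul (hφI n r hr) (by rw [hI]; exact Ideal.mem_span_singleton_self _)
    · intro a b ha hb
      rw [hadd]
      exact Submodule.add_mem _ ha hb
  -- Hausdorff property of M
  have haus : ∀ x : M, (∀ n : ℕ, x ∈ (I ^ n • ⊤ : Submodule (PowerSeries (k ⊗[ZMod p] 𝔽)) M)) → x = 0 := by
    set ρ : PowerSeries k →+* PowerSeries (k ⊗[ZMod p] 𝔽) :=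
      PowerSeries.map (algebraMap k (k ⊗[ZMod p] 𝔽)) with hρ
    letI instA : Algebra (PowerSeries k) (PowerSeries (k ⊗[ZMod p] 𝔽)) := ρ.toAlgebra
    letI instM : Module (PowerSeries k) M := Module.compHom M ρ
    haveI instT : IsScalarTower (PowerSeries k) (PowerSeries (k ⊗[ZMod p] 𝔽)) M :=
      ⟨fun a s m => by
        show (ρ a * s) • m = ρ a • (s • m)
        rw [mul_smul]⟩
    haveI hfin1 : Module.Finite (PowerSeries k) (PowerSeries (k ⊗[ZMod p] 𝔽)) := by
      let b := Module.finBasis k (k ⊗[ZMod p] 𝔽)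
      refine ⟨⟨Finset.univ.image (fun i => PowerSeries.C (b i)), ?_⟩⟩
      rw [eq_top_iff]
      rintro g -
      rw [Finset.coe_image, Finset.coe_univ, Set.image_univ]
      have hsm : ∀ (a : PowerSeries k) (x : PowerSeries (k ⊗[ZMod p] 𝔽)),
          a • x = ρ a * x := fun a x => rfl
      have hg : g = ∑ i, (PowerSeries.mk fun n =>
          b.repr (PowerSeries.coeff n g) i) • PowerSeries.C (b i) := by
        ext n
        rw [map_sum]
        simp only [hsm, PowerSeries.coeff_mul_C, hρ, PowerSeries.coeff_map,
          PowerSeries.coeff_mk, ← Algebra.smul_def]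
        exact (b.sum_repr _).symm
      rw [hg]
      exact Submodule.sum_mem _ fun i _ =>
        Submodule.smul_mem _ _ (Submodule.subset_span ⟨i, rfl⟩)
    haveI hfin2 : Module.Finite (PowerSeries k) M :=
      Module.Finite.trans (PowerSeries (k ⊗[ZMod p] 𝔽)) M
    have htrans : ∀ (n : ℕ) (y : M), y ∈ (I ^ n • ⊤ : Submodule (PowerSeries (k ⊗[ZMod p] 𝔽)) M) →
        y ∈ ((Ideal.span {PowerSeries.X} : Ideal (PowerSeries k)) ^ n • ⊤ :
          Submodule (PowerSeries k) M) := by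
      intro n y hy
      refine Submodule.smul_induction_on hy ?_ (fun a b ha hb => Submodule.add_mem _ ha hb)
      intro r hr m _
      rw [hI, Ideal.span_singleton_pow, Ideal.mem_span_singleton] at hr
      obtain ⟨c, rfl⟩ := hr
      rw [mul_smul]
      have heq : (PowerSeries.X : PowerSeries (k ⊗[ZMod p] 𝔽)) ^ n • (c • m)
          = (PowerSeries.X : PowerSeries k) ^ n • (c • m) := by
        show _ = ρ ((PowerSeries.X : PowerSeries k) ^ n) • (c • m)
        rw [map_pow, hρ, PowerSeries.map_X]
      rw [heq]
      exact Submodule.smul_mem_smul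
        (Ideal.pow_mem_pow (Ideal.mem_span_singleton_self _) n) Submodule.mem_top
    intro x hx
    have hJ : (Ideal.span {PowerSeries.X} : Ideal (PowerSeries k)) ≠ ⊤ := by
      rw [Ne, Ideal.span_singleton_eq_top]
      intro h
      have h2 := h.map (PowerSeries.constantCoeff)
      rw [PowerSeries.constantCoeff_X] at h2
      simpa using h2
    have hbot := Ideal.iInf_pow_smul_eq_bot_of_isLocalRing (M := M)
      (Ideal.span {PowerSeries.X} : Ideal (PowerSeries k)) hJ
    have hmem : x ∈ (⨅ n : ℕ, ((Ideal.span {PowerSeries.X} : Ideal (PowerSeries k)) ^ n • ⊤ :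
        Submodule (PowerSeries k) M)) :=
      Submodule.mem_iInf _ |>.mpr fun n => htrans n x (hx n)
    rw [hbot] at hmem
    simpa using hmem
  -- a surjection from a finite free module
  obtain ⟨d, π, hπ⟩ := Module.Finite.exists_fin' (PowerSeries (k ⊗[ZMod p] 𝔽)) M
  have hcoord : ∀ (c : ℕ) (v : Fin d → PowerSeries (k ⊗[ZMod p] 𝔽)),
      v ∈ (I ^ c • ⊤ : Submodule (PowerSeries (k ⊗[ZMod p] 𝔽)) (Fin d → PowerSeries (k ⊗[ZMod p] 𝔽))) → ∀ a, v a ∈ I ^ c := by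
    intro c v hv a
    refine Submodule.smul_induction_on hv ?_ ?_
    · intro r hr w _
      have : (r • w) a = r * w a := rfl
      rw [this]
      exact Ideal.mul_mem_right _ _ hr
    · intro u w hu hw
      rw [Pi.add_apply]
      exact Ideal.add_mem _ hu hw
  have hcoord' : ∀ (c : ℕ) (v : Fin d → PowerSeries (k ⊗[ZMod p] 𝔽)),
      (∀ a, v a ∈ I ^ c) → v ∈ (I ^ c • ⊤ : Submodule (PowerSeries (k ⊗[ZMod p] 𝔽)) (Fin d → PowerSeries (k ⊗[ZMod p] 𝔽))) := by
    intro c v hv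
    have hv' : v = ∑ a : Fin d, v a • (Pi.single a 1 : Fin d → PowerSeries (k ⊗[ZMod p] 𝔽)) := by
      funext b
      simp [Finset.sum_apply, Pi.single_apply]
    rw [hv']
    exact Submodule.sum_mem _ fun a _ => Submodule.smul_mem_smul (hv a) Submodule.mem_top
  have hlift : ∀ (c : ℕ) (y : M), y ∈ (I ^ c • ⊤ : Submodule (PowerSeries (k ⊗[ZMod p] 𝔽)) M) →
      ∃ t, t ∈ (I ^ c • ⊤ : Submodule (PowerSeries (k ⊗[ZMod p] 𝔽)) (Fin d → PowerSeries (k ⊗[ZMod p] 𝔽))) ∧ π t = y := by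
    intro c y hy
    have : y ∈ Submodule.map π (I ^ c • ⊤) := by
      rw [Submodule.map_smul'', Submodule.map_top, LinearMap.range_eq_top.mpr hπ]
      exact hy
    obtain ⟨t, ht, hty⟩ := this
    exact ⟨t, ht, hty⟩
  have hπmem : ∀ (c : ℕ) (v : Fin d → PowerSeries (k ⊗[ZMod p] 𝔽)),
      v ∈ (I ^ c • ⊤ : Submodule (PowerSeries (k ⊗[ZMod p] 𝔽)) (Fin d → PowerSeries (k ⊗[ZMod p] 𝔽))) → π v ∈ (I ^ c • ⊤ : Submodule (PowerSeries (k ⊗[ZMod p] 𝔽)) M) := by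
    intro c v hv
    have hmm : π v ∈ Submodule.map π (I ^ c • ⊤) := Submodule.mem_map_of_mem hv
    rw [Submodule.map_smul''] at hmm
    exact Submodule.smul_mono le_rfl le_top hmm
  -- adic limits exist in M
  have limitM : ∀ s : ℕ → M, (∀ n, s (n+1) - s n ∈ (I ^ (n+1) • ⊤ : Submodule (PowerSeries (k ⊗[ZMod p] 𝔽)) M)) →
      ∃ L : M, ∀ n, L - s n ∈ (I ^ n • ⊤ : Submodule (PowerSeries (k ⊗[ZMod p] 𝔽)) M) := by
    intro s hs
    choose dd hdd1 hdd2 using fun n => hlift (n+1) (s (n+1) - s n) (hs n)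
    obtain ⟨t0, ht0⟩ := hπ (s 0)
    set t : ℕ → (Fin d → PowerSeries (k ⊗[ZMod p] 𝔽)) :=
      fun n => t0 + ∑ i ∈ Finset.range n, dd i with ht
    have hπt : ∀ n, π (t n) = s n := by
      intro n
      induction n with
      | zero => simpa [ht] using ht0
      | succ m ih =>
        have hstep : t (m+1) = t m + dd m := by
          simp [ht, Finset.sum_range_succ, add_assoc]
        rw [hstep, map_add, ih, hdd2 m]
        abel
    have hdiff : ∀ {a b : ℕ}, a ≤ b →
        t b - t a ∈ (I ^ (a+1) • ⊤ : Submodule (PowerSeries (k ⊗[ZMod p] 𝔽)) (Fin d → PowerSeries (k ⊗[ZMod p] 𝔽))) := by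
      intro a b hab
      have hsum : t b - t a = ∑ i ∈ Finset.Ico a b, dd i := by
        simp only [ht, add_sub_add_left_eq_sub]
        rw [Finset.sum_Ico_eq_sub _ hab]
      rw [hsum]
      refine Submodule.sum_mem _ fun i hi => ?_
      have hia : a + 1 ≤ i + 1 := by
        have := (Finset.mem_Ico.mp hi).1
        omega
      exact Submodule.smul_mono_left (Ideal.pow_le_pow_right hia) (hdd1 i)
    set T : Fin d → PowerSeries (k ⊗[ZMod p] 𝔽) :=
      fun c => PowerSeries.mk fun j => PowerSeries.coeff j (t (j+1) c) with hT
    refine ⟨π T, ?_⟩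
    intro n
    cases n with
    | zero =>
      rw [pow_zero, Ideal.one_eq_top, Submodule.top_smul]
      exact Submodule.mem_top
    | succ m =>
      have hTt : T - t (m+1) ∈ (I ^ (m+1) • ⊤ :
          Submodule (PowerSeries (k ⊗[ZMod p] 𝔽)) (Fin d → PowerSeries (k ⊗[ZMod p] 𝔽))) := by
        refine hcoord' _ _ fun a => ?_
        rw [hI, Ideal.span_singleton_pow, Ideal.mem_span_singleton, PowerSeries.X_pow_dvd_iff]
        intro j hj
        have h1 : PowerSeries.coeff j (T a) = PowerSeries.coeff j (t (j+1) a) := by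
          simp [hT]
        have hmem := hcoord _ _ (hdiff (show j+1 ≤ m+1 by omega)) a
        rw [hI, Ideal.span_singleton_pow, Ideal.mem_span_singleton,
          PowerSeries.X_pow_dvd_iff] at hmem
        have h2 : PowerSeries.coeff j ((t (m+1) - t (j+1)) a) = 0 := hmem j (by omega)
        rw [Pi.sub_apply, map_sub] at h2
        rw [Pi.sub_apply, map_sub, h1]
        rw [sub_eq_zero] at h2
        rw [← h2, sub_self]
      have heq : π T - s (m+1) = π (T - t (m+1)) := by
        rw [map_sub, hπt]
      rw [heq]
      exact hπmem _ _ hTt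
  have hpow0 : (I ^ 0 • ⊤ : Submodule (PowerSeries (k ⊗[ZMod p] 𝔽)) M) = ⊤ := by
    rw [pow_zero, Ideal.one_eq_top, Submodule.top_smul]
  constructor
  · intro a b hab
    simp only at hab
    have hm : f (a - b) = a - b := by
      have h1 : f a - f b = a - b := by
        rw [sub_eq_sub_iff_sub_eq_sub] at hab
        exact hab
      calc f (a - b) = f a - f b := map_sub F a b
        _ = a - b := h1
    have hmem : ∀ n, a - b ∈ (I ^ n • ⊤ : Submodule (PowerSeries (k ⊗[ZMod p] 𝔽)) M) := by
      intro n
      induction n with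
      | zero => rw [hpow0]; exact Submodule.mem_top
      | succ m ih => exact hm ▸ hfI m _ ih
    exact sub_eq_zero.mp (haus _ hmem)
  · intro y
    set s : ℕ → M := fun n => -(∑ i ∈ Finset.range (n+1), f^[i] y) with hs
    have hwmem : ∀ n, f^[n] y ∈ (I ^ n • ⊤ : Submodule (PowerSeries (k ⊗[ZMod p] 𝔽)) M) := by
      intro n
      induction n with
      | zero => rw [hpow0]; exact Submodule.mem_top
      | succ m ih =>
        rw [Function.iterate_succ_apply']
        exact hfI m _ ih
    have hsdiff : ∀ n, s (n+1) - s n ∈ (I ^ (n+1) • ⊤ : Submodule (PowerSeries (k ⊗[ZMod p] 𝔽)) M) := by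
      intro n
      have hseq : s (n+1) - s n = -(f^[n+1] y) := by
        simp only [hs, Finset.sum_range_succ]
        abel
      rw [hseq]
      exact Submodule.neg_mem _ (hwmem (n+1))
    obtain ⟨L, hL⟩ := limitM s hsdiff
    refine ⟨L, ?_⟩
    show f L - L = y
    have key : ∀ n, f L - L - y ∈ (I ^ n • ⊤ : Submodule (PowerSeries (k ⊗[ZMod p] 𝔽)) M) := by
      intro n
      have h1 : f (L - s n) ∈ (I ^ (n+1) • ⊤ : Submodule (PowerSeries (k ⊗[ZMod p] 𝔽)) M) := hfI n _ (hL n)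
      have h2 : L - s (n+1) ∈ (I ^ (n+1) • ⊤ : Submodule (PowerSeries (k ⊗[ZMod p] 𝔽)) M) := hL (n+1)
      have h3 : f (s n) = s (n+1) + y := by
        have hFs : f (s n) = -(∑ i ∈ Finset.range (n+1), f^[i+1] y) := by
          show F (s n) = _
          simp only [hs, map_neg, map_sum]
          congr 1
          refine Finset.sum_congr rfl fun i _ => ?_
          exact (Function.iterate_succ_apply' f i y).symm
        rw [hFs]
        simp only [hs]
        rw [Finset.sum_range_succ' (fun i => f^[i] y) (n+1)]
        simp only [Function.iterate_zero, id_eq]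
        abel
      have hrearr : f L - L - y = f (L - s n) - (L - s (n+1)) := by
        have hfL : f (L - s n) = f L - f (s n) := map_sub F _ _
        rw [hfL, h3]
        abel
      rw [hrearr]
      exact Submodule.smul_mono_left (Ideal.pow_le_pow_right (Nat.le_succ n))
        (Submodule.sub_mem _ h1 h2)
    exact sub_eq_zero.mp (haus _ key)
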